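/- Let A be a unital C*-algebra with a state φ. Let u₁, u₂ ∈ A be Haar unitaries and w₁, w₂ ∈ A positive elements each having the quarter-circular distribution with respect to φ, and assume that the four unital *-subalgebras generated respectively by u₁, u₂, w₁ and w₂ are free with respect to φ. In M₂(A) set θ = u₁⊗e(1,2) + u₂⊗e(2,1) and χ = w₁⊗e(2,2) + w₂⊗e(1,1). Then: (1) θ is unitary: θ*θ = θθ* = 1 in M₂(A); (2) θ is a Haar unitary with respect to Φ₂, i.e. Φ₂(θ^k) = Φ₂((θ*)^k) = 0 for all k ≥ 1; (3) χ is positive and has the quarter-circular distribution with respect to Φ₂; (4) the unital *-subalgebras of M₂(A) generated by θ and by χ are free with respect to Φ₂. -/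

import Mathlib

open scoped ComplexOrder

noncomputable section

/-- The `k`-th moment of the quarter-circular distribution:
`(1/π)·∫₀² t^k √(4−t²) dt`. -/
def qcMoment (k : ℕ) : ℝ :=
  (1 / Real.pi) * ∫ t in (0:ℝ)..2, t ^ k * Real.sqrt (4 - t ^ 2)

/-- A family of subsets (e.g. unital *-subalgebras) of an algebra is free with respect to a
linear functional `ψ` if `ψ(c₁⋯c_n) = 0` whenever `c_j` lies in the subalgebra of index
`i_j`, consecutive indices are distinct, and all `ψ(c_j) = 0`. -/
def AreFree {R : Type*} [Monoid R] (ψ : R → ℂ) {ι : Type*} (B : ι → Set R) : Prop :=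
  ∀ (n : ℕ), 1 ≤ n → ∀ (c : Fin n → R) (idx : Fin n → ι),
    (∀ j, c j ∈ B (idx j)) →
    (∀ (j : Fin n) (h : j.val + 1 < n), idx j ≠ idx ⟨j.val + 1, h⟩) →
    (∀ j, ψ (c j) = 0) →
    ψ ((List.ofFn c).prod) = 0

namespace Stmt13



variable {A : Type*} [Ring A]

/-- diagonal-form 2×2 matrix -/
def Dm (a b : A) : Matrix (Fin 2) (Fin 2) A :=
  Matrix.single 0 0 a + Matrix.single 1 1 b

/-- antidiagonal-form 2×2 matrix -/
def Em (a b : A) : Matrix (Fin 2) (Fin 2) A :=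
  Matrix.single 0 1 a + Matrix.single 1 0 b

lemma Dm_mul_Dm (a b c d : A) : Dm a b * Dm c d = Dm (a*c) (b*d) := by
  simp only [Dm, add_mul, mul_add]
  rw [Matrix.single_mul_single_same, Matrix.single_mul_single_same,
    Matrix.single_mul_single_of_ne (i := (1 : Fin 2)) (j := (1 : Fin 2)) (k := (0 : Fin 2)) (h := by decide), Matrix.single_mul_single_of_ne (i := (0 : Fin 2)) (j := (0 : Fin 2)) (k := (1 : Fin 2)) (h := by decide)]
  abel

lemma Dm_mul_Em (a b c d : A) : Dm a b * Em c d = Em (a*c) (b*d) := by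
  simp only [Dm, Em, add_mul, mul_add]
  rw [Matrix.single_mul_single_same, Matrix.single_mul_single_same,
    Matrix.single_mul_single_of_ne (i := (1 : Fin 2)) (j := (1 : Fin 2)) (k := (0 : Fin 2)) (h := by decide), Matrix.single_mul_single_of_ne (i := (0 : Fin 2)) (j := (0 : Fin 2)) (k := (1 : Fin 2)) (h := by decide)]
  abel

lemma Em_mul_Dm (a b c d : A) : Em a b * Dm c d = Em (a*d) (b*c) := by
  simp only [Dm, Em, add_mul, mul_add]
  rw [Matrix.single_mul_single_same, Matrix.single_mul_single_same,
    Matrix.single_mul_single_of_ne (i := (0 : Fin 2)) (j := (1 : Fin 2)) (k := (0 : Fin 2)) (h := by decide), Matrix.single_mul_single_of_ne (i := (1 : Fin 2)) (j := (0 : Fin 2)) (k := (1 : Fin 2)) (h := by decide)]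
  abel

lemma Em_mul_Em (a b c d : A) : Em a b * Em c d = Dm (a*d) (b*c) := by
  simp only [Dm, Em, add_mul, mul_add]
  rw [Matrix.single_mul_single_same, Matrix.single_mul_single_same,
    Matrix.single_mul_single_of_ne (i := (0 : Fin 2)) (j := (1 : Fin 2)) (k := (0 : Fin 2)) (h := by decide), Matrix.single_mul_single_of_ne (i := (1 : Fin 2)) (j := (0 : Fin 2)) (k := (1 : Fin 2)) (h := by decide)]
  abel

lemma Dm_one : (1 : Matrix (Fin 2) (Fin 2) A) = Dm 1 1 := by
  ext i j
  fin_cases i <;> fin_cases j <;>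
    simp [Dm, Matrix.one_apply, Matrix.single, Matrix.add_apply]

lemma Dm_apply_one_one (a b : A) : Dm a b 1 1 = b := by
  simp [Dm, Matrix.single, Matrix.add_apply]

lemma Em_apply_one_one (a b : A) : Em a b 1 1 = 0 := by
  simp [Em, Matrix.single, Matrix.add_apply]

lemma star_Dm [StarRing A] (a b : A) : star (Dm a b) = Dm (star a) (star b) := by
  ext i j
  fin_cases i <;> fin_cases j <;>
    simp [Dm, Matrix.star_apply, Matrix.single, Matrix.add_apply]

lemma star_Em [StarRing A] (a b : A) : star (Em a b) = Em (star b) (star a) := by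
  ext i j
  fin_cases i <;> fin_cases j <;>
    simp [Em, Matrix.star_apply, Matrix.single, Matrix.add_apply]

lemma Dm_sub_smul {R : Type*} [CommSemiring R] [Algebra R A] (a b c d : A) (z : R) :
    Dm a b - z • Dm c d = Dm (a - z • c) (b - z • d) := by
  ext i j
  fin_cases i <;> fin_cases j <;>
    simp [Dm, Matrix.single, Matrix.add_apply, Matrix.sub_apply, Matrix.smul_apply]



/-- class of an index: `false` for the unitary letters, `true` for the positive letters -/
def cls (i : Fin 4) : Bool := decide (2 ≤ i.val)

variable {A : Type*} [Ring A] (ψ : A → ℂ) (B : Fin 4 → Set A)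

/-- `a` is a word with all letters of class `t`, alternating, centered, ending at index `i`. -/
def GWordTo (t : Bool) (i : Fin 4) (a : A) : Prop :=
  ∃ l : List (A × Fin 4), l ≠ [] ∧ a = (l.map Prod.fst).prod ∧
    (∀ p ∈ l, p.1 ∈ B p.2 ∧ ψ p.1 = 0 ∧ cls p.2 = t) ∧
    List.Chain' (· ≠ ·) (l.map Prod.snd) ∧ (l.map Prod.snd).getLast? = some i

/-- `a` is an alternating centered word whose last letter has class `t`. -/
def GA (t : Bool) (a : A) : Prop :=
  ∃ l : List (A × Fin 4), l ≠ [] ∧ a = (l.map Prod.fst).prod ∧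
    (∀ p ∈ l, p.1 ∈ B p.2 ∧ ψ p.1 = 0) ∧
    List.Chain' (· ≠ ·) (l.map Prod.snd) ∧
    ∃ i, (l.map Prod.snd).getLast? = some i ∧ cls i = t

lemma GWordTo.single {t : Bool} {i : Fin 4} {a : A} (ha : a ∈ B i) (h0 : ψ a = 0)
    (hc : cls i = t) : GWordTo ψ B t i a :=
  ⟨[(a, i)], by simp, by simp, by simp [ha, h0, hc], by simp [List.Chain'], by simp⟩

lemma GWordTo.snoc {t : Bool} {i j : Fin 4} {a b : A} (h : GWordTo ψ B t i a)
    (hb : b ∈ B j) (h0 : ψ b = 0) (hc : cls j = t) (hij : i ≠ j) :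
    GWordTo ψ B t j (a * b) := by
  obtain ⟨l, hne, hprod, hmem, hch, hlast⟩ := h
  refine ⟨l ++ [(b, j)], by simp, ?_, ?_, ?_, ?_⟩
  · simp [hprod]
  · intro p hp
    rcases List.mem_append.1 hp with h' | h'
    · exact hmem p h'
    · simp at h'; subst h'; exact ⟨hb, h0, hc⟩
  · rw [List.map_append, List.Chain', List.isChain_append]
    refine ⟨hch, by simp, ?_⟩
    intro x hx y hy
    rw [hlast] at hx
    simp at hx hy
    subst hx; subst hy; exact hij
  · rw [List.map_append, List.getLast?_append]; simp

lemma GWordTo.toGA {t : Bool} {i : Fin 4} {a : A} (h : GWordTo ψ B t i a) : GA ψ B t a := by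
  obtain ⟨l, hne, hprod, hmem, hch, hlast⟩ := h
  refine ⟨l, hne, hprod, fun p hp => ⟨(hmem p hp).1, (hmem p hp).2.1⟩, hch, i, hlast, ?_⟩
  have : (a, i) = (a, i) := rfl
  -- cls i = t : last index is in the list
  have hi : i ∈ l.map Prod.snd := List.mem_of_mem_getLast? (by rw [hlast]; rfl)
  obtain ⟨p, hp, hpi⟩ := List.mem_map.1 hi
  rw [← hpi]; exact (hmem p hp).2.2

lemma GA.append {t t' : Bool} {i : Fin 4} {a c : A} (h : GA ψ B t a)
    (hc : GWordTo ψ B t' i c) (htt : t ≠ t') : GA ψ B t' (a * c) := by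
  obtain ⟨l₁, hne₁, hp₁, hm₁, hc₁, j, hl₁, hcj⟩ := h
  obtain ⟨l₂, hne₂, hp₂, hm₂, hc₂, hl₂⟩ := hc
  refine ⟨l₁ ++ l₂, by simp [hne₁], ?_, ?_, ?_, i, ?_, ?_⟩
  · simp [hp₁, hp₂]
  · intro p hp
    rcases List.mem_append.1 hp with h' | h'
    · exact hm₁ p h'
    · exact ⟨(hm₂ p h').1, (hm₂ p h').2.1⟩
  · rw [List.map_append, List.Chain', List.isChain_append]
    refine ⟨hc₁, hc₂, ?_⟩
    intro x hx y hy
    rw [hl₁] at hx; simp at hx; subst hx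
    -- y is head of l₂.map snd, so cls y = t'
    have hy' : y ∈ l₂.map Prod.snd := List.mem_of_mem_head? hy
    obtain ⟨p, hp, hpy⟩ := List.mem_map.1 hy'
    intro he
    apply htt
    rw [← hcj, he, ← hpy, (hm₂ p hp).2.2]
  · rw [List.map_append, List.getLast?_append, hl₂]; rfl
  · -- cls i = t'
    have hi : i ∈ l₂.map Prod.snd := List.mem_of_mem_getLast? (by rw [hl₂]; rfl)
    obtain ⟨p, hp, hpi⟩ := List.mem_map.1 hi
    rw [← hpi]; exact (hm₂ p hp).2.2

lemma GA.psi_zero (hfree : AreFree ψ B) {t : Bool} {a : A} (h : GA ψ B t a) : ψ a = 0 := by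
  obtain ⟨l, hne, hprod, hmem, hch, -⟩ := h
  have hn : 1 ≤ l.length := List.length_pos_iff.2 hne
  have := hfree l.length hn (fun j => (l.get j).1) (fun j => (l.get j).2)
    (fun j => (hmem _ (l.get_mem _)).1)
    ?_ (fun j => (hmem _ (l.get_mem _)).2)
  · have he : List.ofFn (fun j => (l.get j).1) = List.map Prod.fst l := by
      conv_rhs => rw [← List.ofFn_get l]
      rw [List.map_ofFn]; rfl
    rw [hprod, ← he]
    exact this
  · intro j hj
    have := List.isChain_iff_getElem.1 hch j.val (by simp; omega)
    simpa using this


section MatrixLevel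

variable {A : Type*} [Ring A] [Algebra ℂ A] (φ : A →ₗ[ℂ] ℂ) (B : Fin 4 → Set A)

/-- generator matrices of type `t` -/
def GenM (t : Bool) (M : Matrix (Fin 2) (Fin 2) A) : Prop :=
  (∃ x y, M = Dm x y ∧ (∃ i, GWordTo ⇑φ B t i x) ∧ (∃ j, GWordTo ⇑φ B t j y)) ∨
  (∃ x y, M = Em x y ∧ (∃ i, GWordTo ⇑φ B t i x) ∧ (∃ j, GWordTo ⇑φ B t j y))

/-- accumulated product state -/
def MS (t : Bool) (M : Matrix (Fin 2) (Fin 2) A) : Prop :=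
  (∃ x y, M = Dm x y ∧ GA ⇑φ B t x ∧ GA ⇑φ B t y) ∨
  (∃ x y, M = Em x y ∧ GA ⇑φ B t x ∧ GA ⇑φ B t y)

lemma GenM.toMS {t M} (h : GenM φ B t M) : MS φ B t M := by
  rcases h with ⟨x, y, hM, ⟨i, hx⟩, ⟨j, hy⟩⟩ | ⟨x, y, hM, ⟨i, hx⟩, ⟨j, hy⟩⟩
  · exact Or.inl ⟨x, y, hM, hx.toGA _ _, hy.toGA _ _⟩
  · exact Or.inr ⟨x, y, hM, hx.toGA _ _, hy.toGA _ _⟩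

lemma MS.mul {t t' M N} (h : MS φ B t M) (hg : GenM φ B t' N) (htt : t ≠ t') :
    MS φ B t' (M * N) := by
  rcases h with ⟨x, y, rfl, hx, hy⟩ | ⟨x, y, rfl, hx, hy⟩ <;>
    rcases hg with ⟨c, d, rfl, ⟨i, hc⟩, ⟨j, hd⟩⟩ | ⟨c, d, rfl, ⟨i, hc⟩, ⟨j, hd⟩⟩
  · exact Or.inl ⟨_, _, Dm_mul_Dm .., hx.append _ _ hc htt, hy.append _ _ hd htt⟩
  · exact Or.inr ⟨_, _, Dm_mul_Em .., hx.append _ _ hc htt, hy.append _ _ hd htt⟩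
  · exact Or.inr ⟨_, _, Em_mul_Dm .., hx.append _ _ hd htt, hy.append _ _ hc htt⟩
  · exact Or.inl ⟨_, _, Em_mul_Em .., hx.append _ _ hd htt, hy.append _ _ hc htt⟩

lemma MS.entry11 (hfree : AreFree ⇑φ B) {t M} (h : MS φ B t M) : φ (M 1 1) = 0 := by
  rcases h with ⟨x, y, rfl, hx, hy⟩ | ⟨x, y, rfl, hx, hy⟩
  · rw [Dm_apply_one_one]; exact hy.psi_zero _ _ hfree
  · rw [Em_apply_one_one]; exact map_zero φ

set_option maxHeartbeats 1000000 in
lemma listProd_entry_aux (hfree : AreFree ⇑φ B) :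
    ∀ (l : List (Matrix (Fin 2) (Fin 2) A × Bool)),
    (∀ p ∈ l, p.1 ∈ Submodule.span ℂ {M | GenM φ B p.2 M}) →
    List.Chain' (fun p q => p.2 ≠ q.2) l →
    ∀ (t : Bool) (M : Matrix (Fin 2) (Fin 2) A), MS φ B t M →
    (∀ p ∈ l.head?, t ≠ p.2) →
    φ ((M * (l.map Prod.fst).prod) 1 1) = 0 := by
  intro l
  induction l with
  | nil =>
    intro _ _ t M hM _
    simpa using MS.entry11 φ B hfree hM
  | cons p l ih =>
    intro hmem hch t M hM hhead
    obtain ⟨x, t'⟩ := p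
    have htt : t ≠ t' := hhead _ rfl
    have hch' := (List.isChain_cons.1 hch)
    have hx := hmem (x, t') (List.mem_cons_self)
    simp only at hx
    have hmem2 : ∀ q ∈ l, q.1 ∈ Submodule.span ℂ {M | GenM φ B q.2 M} :=
      fun q hq => hmem q (List.mem_cons_of_mem _ hq)
    have hh2 : ∀ q ∈ l.head?, t' ≠ q.2 := fun q hq => hch'.1 q hq
    have hch2 := hch'.2
    clear hmem hch hhead hch'
    rw [List.map_cons, List.prod_cons, ← mul_assoc]
    induction hx using Submodule.span_induction with
    | mem g hg =>
      exact ih hmem2 hch2 t' (M * g) (hM.mul _ _ hg htt) hh2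
    | zero => simp
    | add a b ha hb iha ihb => rw [mul_add, add_mul, Matrix.add_apply, map_add, iha, ihb, add_zero]
    | smul z a ha iha =>
      rw [mul_smul_comm, smul_mul_assoc, Matrix.smul_apply, map_smul, iha, smul_zero]

set_option maxHeartbeats 1000000 in
lemma listProd_entry (hfree : AreFree ⇑φ B)
    (l : List (Matrix (Fin 2) (Fin 2) A × Bool)) (hne : l ≠ [])
    (hmem : ∀ p ∈ l, p.1 ∈ Submodule.span ℂ {M | GenM φ B p.2 M})
    (hch : List.Chain' (fun p q => p.2 ≠ q.2) l) :
    φ (((l.map Prod.fst).prod) 1 1) = 0 := by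
  cases l with
  | nil => exact absurd rfl hne
  | cons p l =>
    obtain ⟨x, t'⟩ := p
    have hch' := (List.isChain_cons.1 hch)
    have hx := hmem (x, t') (List.mem_cons_self)
    simp only at hx
    have hmem2 : ∀ q ∈ l, q.1 ∈ Submodule.span ℂ {M | GenM φ B q.2 M} :=
      fun q hq => hmem q (List.mem_cons_of_mem _ hq)
    have hh2 : ∀ q ∈ l.head?, t' ≠ q.2 := fun q hq => hch'.1 q hq
    have hch2 := hch'.2
    clear hmem hch hch' hne
    rw [List.map_cons, List.prod_cons]
    induction hx using Submodule.span_induction with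
    | mem g hg =>
      exact listProd_entry_aux φ B hfree l hmem2 hch2 t' g (GenM.toMS φ B hg) hh2
    | zero => simp
    | add a b ha hb iha ihb => rw [add_mul, Matrix.add_apply, map_add, iha, ihb, add_zero]
    | smul z a ha iha => rw [smul_mul_assoc, Matrix.smul_apply, map_smul, iha, smul_zero]

end MatrixLevel

section Generators

lemma centered_span {M : Type*} {ι : Type*} [AddCommGroup M] [Module ℂ M]
    (Φ : M →ₗ[ℂ] ℂ) (e : M) (T : ι → M) {x : M}
    (hx : x ∈ Submodule.span ℂ (Set.range T)) (h0 : Φ x = 0) :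
    x ∈ Submodule.span ℂ (Set.range fun k => T k - Φ (T k) • e) := by
  classical
  obtain ⟨c, hc⟩ := Finsupp.mem_span_range_iff_exists_finsupp.1 hx
  rw [Finsupp.sum] at hc
  have hΦsum : ∑ k ∈ c.support, c k • Φ (T k) • e = Φ x • e := by
    rw [← hc, map_sum, Finset.sum_smul]
    exact Finset.sum_congr rfl fun k _ => by rw [map_smul, smul_assoc]
  have key : ∑ k ∈ c.support, c k • (T k - Φ (T k) • e) = x := by
    have : ∑ k ∈ c.support, c k • (T k - Φ (T k) • e)
        = ∑ k ∈ c.support, (c k • T k - c k • Φ (T k) • e) :=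
      Finset.sum_congr rfl fun k _ => smul_sub _ _ _
    rw [this, Finset.sum_sub_distrib, hc, hΦsum, h0, zero_smul, sub_zero]
  rw [← key]
  exact Submodule.sum_mem _ fun k _ =>
    Submodule.smul_mem _ _ (Submodule.subset_span ⟨k, rfl⟩)

variable {A : Type*} [Ring A] [Algebra ℂ A] (φ : A →ₗ[ℂ] ℂ) (B : Fin 4 → Set A)

lemma Em_pow_genM {a b : A} {i j : Fin 4}
    (ha : a ∈ B i) (hb : b ∈ B j) (h0a : φ a = 0) (h0b : φ b = 0)
    (hci : cls i = false) (hcj : cls j = false) (hij : i ≠ j) (n : ℕ) :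
    (∃ x y, (Em a b) ^ (n+1) = Dm x y ∧ GWordTo ⇑φ B false j x ∧ GWordTo ⇑φ B false i y) ∨
    (∃ x y, (Em a b) ^ (n+1) = Em x y ∧ GWordTo ⇑φ B false i x ∧ GWordTo ⇑φ B false j y) := by
  induction n with
  | zero =>
    right
    exact ⟨a, b, by rw [pow_one], GWordTo.single _ _ ha h0a hci, GWordTo.single _ _ hb h0b hcj⟩
  | succ n ih =>
    rcases ih with ⟨x, y, hxy, hx, hy⟩ | ⟨x, y, hxy, hx, hy⟩
    · right
      refine ⟨x * a, y * b, ?_, hx.snoc _ _ ha h0a hci hij.symm, hy.snoc _ _ hb h0b hcj hij⟩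
      rw [pow_succ, hxy, Dm_mul_Em]
    · left
      refine ⟨x * b, y * a, ?_, hx.snoc _ _ hb h0b hcj hij, hy.snoc _ _ ha h0a hci hij.symm⟩
      rw [pow_succ, hxy, Em_mul_Em]

lemma Em_pow_genM' {a b : A} {i j : Fin 4}
    (ha : a ∈ B i) (hb : b ∈ B j) (h0a : φ a = 0) (h0b : φ b = 0)
    (hci : cls i = false) (hcj : cls j = false) (hij : i ≠ j) (n : ℕ) :
    GenM φ B false ((Em a b) ^ (n+1)) := by
  rcases Em_pow_genM φ B ha hb h0a h0b hci hcj hij n with ⟨x, y, hxy, hx, hy⟩ | ⟨x, y, hxy, hx, hy⟩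
  · exact Or.inl ⟨x, y, hxy, ⟨_, hx⟩, ⟨_, hy⟩⟩
  · exact Or.inr ⟨x, y, hxy, ⟨_, hx⟩, ⟨_, hy⟩⟩

omit [Algebra ℂ A] in
lemma Dm_pow (a b : A) (k : ℕ) : (Dm a b) ^ k = Dm (a ^ k) (b ^ k) := by
  induction k with
  | zero => rw [pow_zero, pow_zero, pow_zero, Dm_one]
  | succ k ih => rw [pow_succ, pow_succ, pow_succ, ih, Dm_mul_Dm]

/-- the entry-(1,1) linear map -/
def entryLM : Matrix (Fin 2) (Fin 2) A →ₗ[ℂ] A where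
  toFun M := M 1 1
  map_add' _ _ := rfl
  map_smul' _ _ := rfl

end Generators

end Stmt13

open Stmt13

set_option maxHeartbeats 1000000

/-- for free Haar unitaries `u₁, u₂` and free positive quarter-circular
`w₁, w₂`, the matrices `θ = u₁⊗e(1,2) + u₂⊗e(2,1)` and `χ = w₁⊗e(2,2) + w₂⊗e(1,1)` satisfy:
(1) `θ` is unitary; (2) `θ` is a Haar unitary w.r.t. `Φ₂`; (3) `χ` is positive
quarter-circular w.r.t. `Φ₂`; (4) `θ` and `χ` are *-free w.r.t. `Φ₂`. -/
theorem haarUnitary_quarterCircular_polar_decomposition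
    (A : Type*) [NormedRing A] [StarRing A] [CStarRing A] [NormedAlgebra ℂ A]
    [CompleteSpace A] [StarModule ℂ A]
    (φ : A →ₗ[ℂ] ℂ) (hφ1 : φ 1 = 1) (hφpos : ∀ a : A, 0 ≤ φ (star a * a))
    (u₁ u₂ w₁ w₂ : A)
    (hu₁ : star u₁ * u₁ = 1 ∧ u₁ * star u₁ = 1)
    (hu₂ : star u₂ * u₂ = 1 ∧ u₂ * star u₂ = 1)
    (hu₁haar : ∀ k : ℕ, 1 ≤ k → φ (u₁ ^ k) = 0 ∧ φ ((star u₁) ^ k) = 0)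
    (hu₂haar : ∀ k : ℕ, 1 ≤ k → φ (u₂ ^ k) = 0 ∧ φ ((star u₂) ^ k) = 0)
    (hw₁pos : ∃ y : A, w₁ = star y * y) (hw₂pos : ∃ y : A, w₂ = star y * y)
    (hw₁qc : ∀ k : ℕ, φ (w₁ ^ k) = (qcMoment k : ℂ))
    (hw₂qc : ∀ k : ℕ, φ (w₂ ^ k) = (qcMoment k : ℂ))
    (hfree : AreFree (fun a => φ a)
      (fun i : Fin 4 =>
        ((StarAlgebra.adjoin ℂ {(![u₁, u₂, w₁, w₂]) i} : StarSubalgebra ℂ A) : Set A))) :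
    -- θ and χ
    (star (Matrix.single (0 : Fin 2) (1 : Fin 2) u₁ + Matrix.single (1 : Fin 2) (0 : Fin 2) u₂)
        * (Matrix.single (0 : Fin 2) (1 : Fin 2) u₁ + Matrix.single (1 : Fin 2) (0 : Fin 2) u₂) = 1 ∧
      (Matrix.single (0 : Fin 2) (1 : Fin 2) u₁ + Matrix.single (1 : Fin 2) (0 : Fin 2) u₂)
        * star (Matrix.single (0 : Fin 2) (1 : Fin 2) u₁ + Matrix.single (1 : Fin 2) (0 : Fin 2) u₂) = 1) ∧
    (∀ k : ℕ, 1 ≤ k →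
      φ ((((Matrix.single (0 : Fin 2) (1 : Fin 2) u₁ + Matrix.single (1 : Fin 2) (0 : Fin 2) u₂)) ^ k) 1 1)
        = 0 ∧
      φ (((star (Matrix.single (0 : Fin 2) (1 : Fin 2) u₁ + Matrix.single (1 : Fin 2) (0 : Fin 2) u₂)) ^ k) 1 1)
        = 0) ∧
    ((∃ Y : Matrix (Fin 2) (Fin 2) A,
        Matrix.single (1 : Fin 2) (1 : Fin 2) w₁ + Matrix.single (0 : Fin 2) (0 : Fin 2) w₂ = star Y * Y) ∧
      (∀ k : ℕ,
        φ (((Matrix.single (1 : Fin 2) (1 : Fin 2) w₁ + Matrix.single (0 : Fin 2) (0 : Fin 2) w₂) ^ k) 1 1)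
          = (qcMoment k : ℂ))) ∧
    AreFree (fun x : Matrix (Fin 2) (Fin 2) A => φ (x 1 1))
      (fun i : Fin 2 =>
        ((StarAlgebra.adjoin ℂ
          {(![Matrix.single (0 : Fin 2) (1 : Fin 2) u₁ + Matrix.single (1 : Fin 2) (0 : Fin 2) u₂,
              Matrix.single (1 : Fin 2) (1 : Fin 2) w₁ + Matrix.single (0 : Fin 2) (0 : Fin 2) w₂]) i} :
          StarSubalgebra ℂ (Matrix (Fin 2) (Fin 2) A)) : Set (Matrix (Fin 2) (Fin 2) A))) := by
  set B : Fin 4 → Set A := (fun i : Fin 4 =>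
    ((StarAlgebra.adjoin ℂ {(![u₁, u₂, w₁, w₂]) i} : StarSubalgebra ℂ A) : Set A)) with hBdef
  have hfree' : AreFree (⇑φ) B := hfree
  set θ : Matrix (Fin 2) (Fin 2) A :=
    Matrix.single (0 : Fin 2) (1 : Fin 2) u₁ + Matrix.single (1 : Fin 2) (0 : Fin 2) u₂
    with hθdef
  set χ : Matrix (Fin 2) (Fin 2) A :=
    Matrix.single (1 : Fin 2) (1 : Fin 2) w₁ + Matrix.single (0 : Fin 2) (0 : Fin 2) w₂
    with hχdef
  have hθE : θ = Em u₁ u₂ := rfl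
  have hχD : χ = Dm w₂ w₁ := add_comm _ _
  have hstarθ : star θ = Em (star u₂) (star u₁) := by rw [hθE, star_Em]
  -- Part 1
  have h1a : star θ * θ = 1 := by rw [hstarθ, hθE, Em_mul_Em, hu₂.1, hu₁.1, ← Dm_one]
  have h1b : θ * star θ = 1 := by rw [hstarθ, hθE, Em_mul_Em, hu₁.2, hu₂.2, ← Dm_one]
  -- letters
  have hBu₁ : u₁ ∈ B 0 := StarAlgebra.self_mem_adjoin_singleton ℂ u₁
  have hBu₂ : u₂ ∈ B 1 := StarAlgebra.self_mem_adjoin_singleton ℂ u₂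
  have hBsu₁ : star u₁ ∈ B 0 := StarAlgebra.star_self_mem_adjoin_singleton ℂ u₁
  have hBsu₂ : star u₂ ∈ B 1 := StarAlgebra.star_self_mem_adjoin_singleton ℂ u₂
  have hφu₁ : φ u₁ = 0 := by have := (hu₁haar 1 le_rfl).1; rwa [pow_one] at this
  have hφu₂ : φ u₂ = 0 := by have := (hu₂haar 1 le_rfl).1; rwa [pow_one] at this
  have hφsu₁ : φ (star u₁) = 0 := by have := (hu₁haar 1 le_rfl).2; rwa [pow_one] at this
  have hφsu₂ : φ (star u₂) = 0 := by have := (hu₂haar 1 le_rfl).2; rwa [pow_one] at this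
  have h01 : (0 : Fin 4) ≠ 1 := by decide
  -- powers of θ and star θ are generator matrices
  have hθpow : ∀ n : ℕ, GenM φ B false (θ ^ (n + 1)) := by
    intro n
    rw [hθE]
    exact Em_pow_genM' φ B hBu₁ hBu₂ hφu₁ hφu₂ rfl rfl h01 n
  have hθspow : ∀ n : ℕ, GenM φ B false ((star θ) ^ (n + 1)) := by
    intro n
    rw [hstarθ]
    exact Em_pow_genM' φ B hBsu₂ hBsu₁ hφsu₂ hφsu₁ rfl rfl h01.symm n
  -- Part 2
  have h2 : ∀ k : ℕ, 1 ≤ k → φ ((θ ^ k) 1 1) = 0 ∧ φ (((star θ) ^ k) 1 1) = 0 := by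
    intro k hk
    obtain ⟨n, rfl⟩ := Nat.exists_eq_add_of_le hk
    rw [add_comm]
    exact ⟨MS.entry11 φ B hfree' ((hθpow n).toMS φ B),
      MS.entry11 φ B hfree' ((hθspow n).toMS φ B)⟩
  -- Part 3
  have hχpow : ∀ k : ℕ, χ ^ k = Dm (w₂ ^ k) (w₁ ^ k) := by
    intro k; rw [hχD, Dm_pow]
  have h3b : ∀ k : ℕ, φ ((χ ^ k) 1 1) = (qcMoment k : ℂ) := by
    intro k; rw [hχpow, Dm_apply_one_one, hw₁qc]
  have h3a : ∃ Y : Matrix (Fin 2) (Fin 2) A, χ = star Y * Y := by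
    obtain ⟨y₁, hy₁⟩ := hw₁pos
    obtain ⟨y₂, hy₂⟩ := hw₂pos
    exact ⟨Dm y₂ y₁, by rw [hχD, star_Dm, Dm_mul_Dm, ← hy₁, ← hy₂]⟩
  refine ⟨⟨h1a, h1b⟩, h2, ⟨h3a, h3b⟩, ?_⟩
  -- Part 4
  -- the unitary θ as a unit
  set u : (Matrix (Fin 2) (Fin 2) A)ˣ := ⟨θ, star θ, h1b, h1a⟩ with hudef
  set T : ℤ → Matrix (Fin 2) (Fin 2) A := fun k => Units.val (u ^ k) with hTdef
  have hval : ∀ n : ℕ, T (n : ℤ) = θ ^ n := by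
    intro n; rw [hTdef]; simp only [zpow_natCast, Units.val_pow_eq_pow_val]; rfl
  have hvalneg : ∀ n : ℕ, T (-(n : ℤ)) = (star θ) ^ n := by
    intro n; rw [hTdef]
    simp only [zpow_neg, zpow_natCast, ← inv_pow, Units.val_pow_eq_pow_val]
    rfl
  have hTadd : ∀ j k : ℤ, T j * T k = T (j + k) := by
    intro j k; rw [hTdef]; simp only [← Units.val_mul, ← zpow_add]
  have hT0 : T 0 = 1 := rfl
  have hTstar : ∀ k : ℤ, star (T k) = T (-k) := by
    intro k
    obtain ⟨n, rfl | rfl⟩ := k.eq_nat_or_neg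
    · rw [hval, hvalneg, star_pow]
    · rw [hvalneg, neg_neg, hval, star_pow, star_star]
  -- θ-algebra is contained in the span of the T k
  have hmulT : ∀ x ∈ Submodule.span ℂ (Set.range T), ∀ y ∈ Submodule.span ℂ (Set.range T),
      x * y ∈ Submodule.span ℂ (Set.range T) := by
    intro x hx
    induction hx using Submodule.span_induction with
    | mem a ha =>
      intro y hy
      induction hy using Submodule.span_induction with
      | mem b hb =>
        obtain ⟨j, rfl⟩ := ha; obtain ⟨k, rfl⟩ := hb
        rw [hTadd]; exact Submodule.subset_span ⟨j + k, rfl⟩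
      | zero => rw [mul_zero]; exact Submodule.zero_mem _
      | add b c hb hc ihb ihc => rw [mul_add]; exact Submodule.add_mem _ ihb ihc
      | smul z b hb ihb => rw [mul_smul_comm]; exact Submodule.smul_mem _ _ ihb
    | zero => intro y hy; rw [zero_mul]; exact Submodule.zero_mem _
    | add a b ha hb iha ihb => intro y hy; rw [add_mul]; exact Submodule.add_mem _ (iha y hy) (ihb y hy)
    | smul z a ha iha => intro y hy; rw [smul_mul_assoc]; exact Submodule.smul_mem _ _ (iha y hy)
  have hθadj : ∀ x ∈ StarAlgebra.adjoin ℂ ({θ} : Set (Matrix (Fin 2) (Fin 2) A)),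
      x ∈ Submodule.span ℂ (Set.range T) := by
    intro x hx
    induction hx using StarAlgebra.adjoin_induction with
    | mem y hy =>
      rw [Set.mem_singleton_iff] at hy; subst hy
      exact Submodule.subset_span ⟨1, by simpa using hval 1⟩
    | algebraMap r =>
      rw [Algebra.algebraMap_eq_smul_one, ← hT0]
      exact Submodule.smul_mem _ _ (Submodule.subset_span ⟨0, rfl⟩)
    | add x y hx hy ihx ihy => exact Submodule.add_mem _ ihx ihy
    | mul x y hx hy ihx ihy => exact hmulT x ihx y ihy
    | star x hx ihx =>
      clear hx
      induction ihx using Submodule.span_induction with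
      | mem a ha =>
        obtain ⟨k, rfl⟩ := ha
        rw [hTstar]; exact Submodule.subset_span ⟨-k, rfl⟩
      | zero => rw [star_zero]; exact Submodule.zero_mem _
      | add a b ha hb iha ihb => rw [star_add]; exact Submodule.add_mem _ iha ihb
      | smul z a ha iha => rw [star_smul]; exact Submodule.smul_mem _ _ iha
  -- χ-algebra is contained in the span of the χ ^ k
  have hstarχ : star χ = χ := by
    obtain ⟨y₁, hy₁⟩ := hw₁pos
    obtain ⟨y₂, hy₂⟩ := hw₂pos
    rw [hχD, star_Dm, hy₁, hy₂, star_mul, star_star, star_mul, star_star]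
  have hmulQ : ∀ x ∈ Submodule.span ℂ (Set.range fun k : ℕ => χ ^ k),
      ∀ y ∈ Submodule.span ℂ (Set.range fun k : ℕ => χ ^ k),
      x * y ∈ Submodule.span ℂ (Set.range fun k : ℕ => χ ^ k) := by
    intro x hx
    induction hx using Submodule.span_induction with
    | mem a ha =>
      intro y hy
      induction hy using Submodule.span_induction with
      | mem b hb =>
        obtain ⟨j, rfl⟩ := ha; obtain ⟨k, rfl⟩ := hb
        rw [← pow_add]; exact Submodule.subset_span ⟨j + k, rfl⟩
      | zero => rw [mul_zero]; exact Submodule.zero_mem _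
      | add b c hb hc ihb ihc => rw [mul_add]; exact Submodule.add_mem _ ihb ihc
      | smul z b hb ihb => rw [mul_smul_comm]; exact Submodule.smul_mem _ _ ihb
    | zero => intro y hy; rw [zero_mul]; exact Submodule.zero_mem _
    | add a b ha hb iha ihb => intro y hy; rw [add_mul]; exact Submodule.add_mem _ (iha y hy) (ihb y hy)
    | smul z a ha iha => intro y hy; rw [smul_mul_assoc]; exact Submodule.smul_mem _ _ (iha y hy)
  have hχadj : ∀ x ∈ StarAlgebra.adjoin ℂ ({χ} : Set (Matrix (Fin 2) (Fin 2) A)),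
      x ∈ Submodule.span ℂ (Set.range fun k : ℕ => χ ^ k) := by
    intro x hx
    induction hx using StarAlgebra.adjoin_induction with
    | mem y hy =>
      rw [Set.mem_singleton_iff] at hy; subst hy
      exact Submodule.subset_span ⟨1, by simp⟩
    | algebraMap r =>
      rw [Algebra.algebraMap_eq_smul_one]
      exact Submodule.smul_mem _ _ (Submodule.subset_span ⟨0, by simp⟩)
    | add x y hx hy ihx ihy => exact Submodule.add_mem _ ihx ihy
    | mul x y hx hy ihx ihy => exact hmulQ x ihx y ihy
    | star x hx ihx =>
      clear hx
      induction ihx using Submodule.span_induction with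
      | mem a ha =>
        obtain ⟨k, rfl⟩ := ha
        rw [star_pow, hstarχ]; exact Submodule.subset_span ⟨k, rfl⟩
      | zero => rw [star_zero]; exact Submodule.zero_mem _
      | add a b ha hb iha ihb => rw [star_add]; exact Submodule.add_mem _ iha ihb
      | smul z a ha iha => rw [star_smul]; exact Submodule.smul_mem _ _ iha
  -- the Φ functional on matrices
  set Φ : Matrix (Fin 2) (Fin 2) A →ₗ[ℂ] ℂ := φ.comp (entryLM (A := A)) with hΦdef
  have hΦapp : ∀ M : Matrix (Fin 2) (Fin 2) A, Φ M = φ (M 1 1) := fun _ => rfl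
  have hΦ1 : Φ 1 = 1 := by rw [hΦapp, Matrix.one_apply_eq, hφ1]
  -- centered θ-elements lie in the span of type-false generators
  have hTgen : ∀ k : ℤ, k ≠ 0 → GenM φ B false (T k) := by
    intro k hk
    obtain ⟨n, rfl | rfl⟩ := k.eq_nat_or_neg
    · obtain ⟨m, rfl⟩ : ∃ m, n = m + 1 := by
        cases n with
        | zero => simp at hk
        | succ m => exact ⟨m, rfl⟩
      rw [hval]; exact hθpow m
    · obtain ⟨m, rfl⟩ : ∃ m, n = m + 1 := by
        cases n with
        | zero => simp at hk
        | succ m => exact ⟨m, rfl⟩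
      rw [hvalneg]; exact hθspow m
  have hcentθ : ∀ x : Matrix (Fin 2) (Fin 2) A,
      x ∈ StarAlgebra.adjoin ℂ ({θ} : Set (Matrix (Fin 2) (Fin 2) A)) → φ (x 1 1) = 0 →
      x ∈ Submodule.span ℂ {M | GenM φ B false M} := by
    intro x hx h0
    have hx' := hθadj x hx
    have h0' : Φ x = 0 := h0
    have := centered_span Φ 1 T hx' h0'
    refine Submodule.span_le.2 ?_ this
    rintro _ ⟨k, rfl⟩
    show T k - Φ (T k) • 1 ∈ (Submodule.span ℂ {M | GenM φ B false M} : Set _)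
    by_cases hk : k = 0
    · subst hk
      rw [hT0, hΦ1, one_smul, sub_self]
      exact Submodule.zero_mem _
    · have hgen := hTgen k hk
      have : Φ (T k) = 0 := MS.entry11 φ B hfree' (hgen.toMS φ B)
      rw [this, zero_smul, sub_zero]
      exact Submodule.subset_span hgen
  -- centered χ-elements lie in the span of type-true generators
  have hBw₁ : ∀ k : ℕ, w₁ ^ k - (qcMoment k : ℂ) • 1 ∈ B 2 := by
    intro k
    exact sub_mem (pow_mem (StarAlgebra.self_mem_adjoin_singleton ℂ w₁) k)
      (SMulMemClass.smul_mem _ (one_mem _))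
  have hBw₂ : ∀ k : ℕ, w₂ ^ k - (qcMoment k : ℂ) • 1 ∈ B 3 := by
    intro k
    exact sub_mem (pow_mem (StarAlgebra.self_mem_adjoin_singleton ℂ w₂) k)
      (SMulMemClass.smul_mem _ (one_mem _))
  have hφw₁ : ∀ k : ℕ, φ (w₁ ^ k - (qcMoment k : ℂ) • 1) = 0 := by
    intro k
    rw [map_sub, map_smul, hw₁qc, hφ1, smul_eq_mul, mul_one, sub_self]
  have hφw₂ : ∀ k : ℕ, φ (w₂ ^ k - (qcMoment k : ℂ) • 1) = 0 := by
    intro k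
    rw [map_sub, map_smul, hw₂qc, hφ1, smul_eq_mul, mul_one, sub_self]
  have hqc0 : (qcMoment 0 : ℂ) = 1 := by rw [← hw₁qc 0, pow_zero, hφ1]
  have hQgen : ∀ k : ℕ, 1 ≤ k → GenM φ B true (χ ^ k - (qcMoment k : ℂ) • 1) := by
    intro k hk
    have : χ ^ k - (qcMoment k : ℂ) • 1
        = Dm (w₂ ^ k - (qcMoment k : ℂ) • 1) (w₁ ^ k - (qcMoment k : ℂ) • 1) := by
      rw [hχpow, Dm_one, Dm_sub_smul]
    rw [this]
    exact Or.inl ⟨_, _, rfl,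
      ⟨3, GWordTo.single _ _ (hBw₂ k) (hφw₂ k) rfl⟩,
      ⟨2, GWordTo.single _ _ (hBw₁ k) (hφw₁ k) rfl⟩⟩
  have hcentχ : ∀ x : Matrix (Fin 2) (Fin 2) A,
      x ∈ StarAlgebra.adjoin ℂ ({χ} : Set (Matrix (Fin 2) (Fin 2) A)) → φ (x 1 1) = 0 →
      x ∈ Submodule.span ℂ {M | GenM φ B true M} := by
    intro x hx h0
    have hx' := hχadj x hx
    have h0' : Φ x = 0 := h0
    have := centered_span Φ 1 (fun k : ℕ => χ ^ k) hx' h0'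
    refine Submodule.span_le.2 ?_ this
    rintro _ ⟨k, rfl⟩
    show χ ^ k - Φ (χ ^ k) • 1 ∈ (Submodule.span ℂ {M | GenM φ B true M} : Set _)
    have hΦχ : Φ (χ ^ k) = (qcMoment k : ℂ) := h3b k
    rw [hΦχ]
    cases k with
    | zero =>
      rw [pow_zero, hqc0, one_smul, sub_self]
      exact Submodule.zero_mem _
    | succ m =>
      exact Submodule.subset_span (hQgen (m + 1) (Nat.succ_le_succ (Nat.zero_le m)))
  -- assemble freeness
  intro n hn c idx hmemc halt hcentc
  have fin2 : ∀ i : Fin 2, i = 0 ∨ i = 1 := by decide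
  set tOf : Fin 2 → Bool := fun i => decide (i = 1) with htOf
  set l : List (Matrix (Fin 2) (Fin 2) A × Bool) :=
    List.ofFn (fun j => (c j, tOf (idx j))) with hldef
  have hmap : l.map Prod.fst = List.ofFn c := by
    rw [hldef, List.map_ofFn]; rfl
  have hne : l ≠ [] := by
    rw [hldef]
    simp only [ne_eq, List.ofFn_eq_nil_iff]
    omega
  have hmem : ∀ p ∈ l, p.1 ∈ Submodule.span ℂ {M | GenM φ B p.2 M} := by
    intro p hp
    rw [hldef, List.mem_ofFn] at hp
    obtain ⟨j, rfl⟩ := hp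
    rcases fin2 (idx j) with h | h
    · have h1 : tOf (idx j) = false := by rw [h]; rfl
      simp only [h1]
      have hmj := hmemc j
      rw [h] at hmj
      exact hcentθ (c j) hmj (hcentc j)
    · have h1 : tOf (idx j) = true := by rw [h]; rfl
      simp only [h1]
      have hmj := hmemc j
      rw [h] at hmj
      exact hcentχ (c j) hmj (hcentc j)
  have hinj : ∀ a b : Fin 2, tOf a = tOf b → a = b := by
    intro a b
    rcases fin2 a with rfl | rfl <;> rcases fin2 b with rfl | rfl <;> simp [htOf]
  have hch : List.Chain' (fun p q => p.2 ≠ q.2) l := by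
    rw [hldef, List.Chain', List.isChain_iff_getElem]
    intro i hi
    have hlen : (List.ofFn (fun j => (c j, tOf (idx j)))).length = n := List.length_ofFn
    rw [hlen] at hi
    simp only [List.getElem_ofFn]
    intro he
    have hi1 : i < n := by omega
    have hi2 : i + 1 < n := by omega
    have he2 : tOf (idx ⟨i, hi1⟩) = tOf (idx ⟨i + 1, hi2⟩) := he
    exact halt ⟨i, hi1⟩ (show i + 1 < n from hi2) (hinj _ _ he2)
  have := listProd_entry φ B hfree' l hne hmem hch
  rw [hmap] at this
  exact this

end
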